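/- The integral over (0,1) of the function s ↦ ⌊1/s⌋ · s (with ⌊·⌋ the floor function) equals π²/12: ∫₀¹ ⌊1/s⌋ s ds = π²/12. -/

import Mathlib

open MeasureTheory Real

private lemma telescope_hasSum :
    HasSum (fun n : ℕ => (1 : ℝ) / (n + 1) - 1 / (n + 2)) 1 := by
  have hnn : ∀ n : ℕ, 0 ≤ (1 : ℝ) / (n + 1) - 1 / (n + 2) := by
    intro n
    have : (1 : ℝ) / (n + 2) ≤ 1 / (n + 1) := by
      gcongr <;> linarith
    linarith
  rw [hasSum_iff_tendsto_nat_of_nonneg hnn]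
  have hsum : ∀ N : ℕ, ∑ n ∈ Finset.range N, ((1 : ℝ) / (n + 1) - 1 / (n + 2))
      = 1 - 1 / (N + 1) := by
    intro N
    have := Finset.sum_range_sub' (fun n : ℕ => (1 : ℝ) / (n + 1)) N
    simpa [add_assoc, one_add_one_eq_two] using this
  simp only [hsum]
  have h0 : Filter.Tendsto (fun N : ℕ => (1 : ℝ) / (N + 1)) Filter.atTop (nhds 0) :=
    tendsto_one_div_add_atTop_nhds_zero_nat
  have := (tendsto_const_nhds (x := (1:ℝ)) (f := Filter.atTop)).sub h0
  simpa using this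

private lemma basel_shift :
    HasSum (fun n : ℕ => (1 : ℝ) / (n + 2) ^ 2) (π ^ 2 / 6 - 1) := by
  have h := hasSum_zeta_two
  have h2 := (hasSum_nat_add_iff' (f := fun n : ℕ => (1 : ℝ) / (n : ℝ) ^ 2) 2).mpr h
  have hsum2 : ∑ i ∈ Finset.range 2, (1 : ℝ) / (i : ℝ) ^ 2 = 1 := by
    norm_num [Finset.sum_range_succ]
  rw [hsum2] at h2
  convert h2 using 2 with n
  · rfl
  push_cast
  ring

private lemma pieces_hasSum :
    HasSum (fun n : ℕ => ((n : ℝ) + 1) * ((((n : ℝ) + 1)⁻¹) ^ 2 - (((n : ℝ) + 2)⁻¹) ^ 2) / 2)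
      (π ^ 2 / 12) := by
  have h := (telescope_hasSum.add basel_shift).mul_left (1 / 2 : ℝ)
  have hval : (1 / 2 : ℝ) * (1 + (π ^ 2 / 6 - 1)) = π ^ 2 / 12 := by ring
  rw [hval] at h
  convert h using 2 with n
  · rfl
  have h1 : ((n : ℝ) + 1) ≠ 0 := by positivity
  have h2 : ((n : ℝ) + 2) ≠ 0 := by positivity
  field_simp
  ring

theorem stmt18 : ∫ s in (0 : ℝ)..1, (⌊s⁻¹⌋ : ℝ) * s = π ^ 2 / 12 := by
  set f : ℝ → ℝ := fun s => (⌊s⁻¹⌋ : ℝ) * s with hf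
  set S : ℕ → Set ℝ := fun n => Set.Ioc (((n : ℝ) + 2)⁻¹) (((n : ℝ) + 1)⁻¹) with hS
  have hmeas : ∀ n, MeasurableSet (S n) := fun n => measurableSet_Ioc
  have hmem : ∀ (n : ℕ) (s : ℝ), s ∈ S n → 0 < s ∧ (n : ℝ) + 1 ≤ s⁻¹ ∧ s⁻¹ < (n : ℝ) + 2 := by
    intro n s hs
    obtain ⟨h1, h2⟩ := hs
    have hn2 : (0 : ℝ) < (n : ℝ) + 2 := by positivity
    have hn1 : (0 : ℝ) < (n : ℝ) + 1 := by positivity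
    have hs0 : 0 < s := lt_trans (by positivity) h1
    exact ⟨hs0, (le_inv_comm₀ hs0 hn1).mp h2, (inv_lt_comm₀ hn2 hs0).mp h1⟩
  have hUnion : (⋃ n, S n) = Set.Ioc (0 : ℝ) 1 := by
    ext s
    simp only [Set.mem_iUnion, Set.mem_Ioc, hS]
    constructor
    · rintro ⟨n, hn⟩
      obtain ⟨hs0, hle, _⟩ := hmem n s hn
      refine ⟨hs0, ?_⟩
      have hn0 : (0 : ℝ) ≤ (n : ℝ) := Nat.cast_nonneg n
      have h1 : (1 : ℝ) ≤ s⁻¹ := by linarith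
      have := (le_inv_comm₀ one_pos hs0).mp h1
      simpa using this
    · rintro ⟨h0, h1⟩
      have hinv : (1 : ℝ) ≤ s⁻¹ := by
        have := (le_inv_comm₀ h0 one_pos).mp (by simpa using h1)
        simpa using this
      have hm1 : 1 ≤ ⌊s⁻¹⌋ := Int.le_floor.mpr (by exact_mod_cast hinv)
      have hcastZ : (((⌊s⁻¹⌋ - 1).toNat : ℤ)) = ⌊s⁻¹⌋ - 1 := Int.toNat_of_nonneg (by omega)
      have hcast : (((⌊s⁻¹⌋ - 1).toNat : ℕ) : ℝ) = (⌊s⁻¹⌋ : ℝ) - 1 := by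
        exact_mod_cast congrArg (Int.cast : ℤ → ℝ) hcastZ
      have hflR : (1 : ℝ) ≤ (⌊s⁻¹⌋ : ℝ) := by exact_mod_cast hm1
      refine ⟨(⌊s⁻¹⌋ - 1).toNat, ?_, ?_⟩
      · have hfl : (0 : ℝ) < (⌊s⁻¹⌋ : ℝ) + 1 := by linarith
        have hlt : s⁻¹ < (⌊s⁻¹⌋ : ℝ) + 1 := Int.lt_floor_add_one _
        have := (inv_lt_comm₀ h0 hfl).mp hlt
        rw [hcast]
        have heq : ((⌊s⁻¹⌋ : ℝ) - 1) + 2 = (⌊s⁻¹⌋ : ℝ) + 1 := by ring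
        rw [heq]
        exact this
      · have hfl : (0 : ℝ) < (⌊s⁻¹⌋ : ℝ) := by linarith
        have hle : (⌊s⁻¹⌋ : ℝ) ≤ s⁻¹ := Int.floor_le _
        have := (le_inv_comm₀ hfl h0).mp hle
        rw [hcast]
        have heq : ((⌊s⁻¹⌋ : ℝ) - 1) + 1 = (⌊s⁻¹⌋ : ℝ) := by ring
        rw [heq]
        exact this
  have hdisj : Pairwise (Function.onFun Disjoint S) := by
    intro m n hmn
    rcases lt_or_gt_of_ne hmn with h | h
    · apply Set.Ioc_disjoint_Ioc.mpr
      refine le_trans (min_le_right _ _) (le_trans ?_ (le_max_left _ _))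
      apply inv_anti₀ (by positivity)
      have : (m : ℝ) + 1 ≤ (n : ℝ) := by exact_mod_cast h
      linarith
    · apply Set.Ioc_disjoint_Ioc.mpr
      refine le_trans (min_le_left _ _) (le_trans ?_ (le_max_right _ _))
      apply inv_anti₀ (by positivity)
      have : (n : ℝ) + 1 ≤ (m : ℝ) := by exact_mod_cast h
      linarith
  have hfm : Measurable f := by
    have h1 : Measurable fun s : ℝ => (⌊s⁻¹⌋ : ℝ) :=
      Measurable.comp measurable_from_top (measurable_inv.floor)
    exact h1.mul measurable_id
  have hint : IntegrableOn f (Set.Ioc (0 : ℝ) 1) := by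
    apply Measure.integrableOn_of_bounded (M := 1)
    · rw [Real.volume_Ioc]; exact ENNReal.ofReal_ne_top
    · exact hfm.aestronglyMeasurable
    · rw [ae_restrict_iff' measurableSet_Ioc]
      filter_upwards with s hs
      obtain ⟨h0, h1⟩ := hs
      have hinv : (1 : ℝ) ≤ s⁻¹ := by
        have := (le_inv_comm₀ h0 one_pos).mp (by simpa using h1)
        simpa using this
      have hm1 : 1 ≤ ⌊s⁻¹⌋ := Int.le_floor.mpr (by exact_mod_cast hinv)
      have hfl0 : (0 : ℝ) ≤ (⌊s⁻¹⌋ : ℝ) := by exact_mod_cast (by omega : (0:ℤ) ≤ ⌊s⁻¹⌋)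
      have hfle : (⌊s⁻¹⌋ : ℝ) ≤ s⁻¹ := Int.floor_le _
      rw [hf, Real.norm_eq_abs, abs_of_nonneg (by positivity)]
      calc (⌊s⁻¹⌋ : ℝ) * s ≤ s⁻¹ * s := mul_le_mul_of_nonneg_right hfle h0.le
        _ = 1 := by field_simp
  have hpieces : ∀ n : ℕ, ∫ s in S n, f s
      = ((n : ℝ) + 1) * ((((n : ℝ) + 1)⁻¹) ^ 2 - (((n : ℝ) + 2)⁻¹) ^ 2) / 2 := by
    intro n
    have heq : Set.EqOn f (fun s => ((n : ℝ) + 1) * s) (S n) := by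
      intro s hs
      obtain ⟨hs0, hle, hlt⟩ := hmem n s hs
      have hfloor : ⌊s⁻¹⌋ = (n : ℤ) + 1 := by
        apply Int.floor_eq_iff.mpr
        constructor
        · push_cast; exact hle
        · push_cast; linarith
      simp only [hf, hfloor]
      push_cast
      ring
    rw [setIntegral_congr_fun (hmeas n) heq]
    have hab : (((n : ℝ) + 2)⁻¹) ≤ (((n : ℝ) + 1)⁻¹) := by
      apply inv_anti₀ (by positivity); linarith
    rw [hS]
    rw [← intervalIntegral.integral_of_le hab]
    rw [intervalIntegral.integral_const_mul, integral_id]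
    ring
  have hHasSum := hasSum_integral_iUnion hmeas hdisj (hUnion ▸ hint)
  rw [hUnion] at hHasSum
  simp only [hpieces] at hHasSum
  have := hHasSum.unique pieces_hasSum
  rw [intervalIntegral.integral_of_le zero_le_one]
  exact this
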